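/- Let c₂ ∈ ℂ be arbitrary and let c₃ ∈ ℂ with c₃ ≠ 0. Then there is no function a₃₂ : ℂ → ℂ satisfying both a₃₂(z) c₂ = c₃² φ₂(c₃ z) for all z ∈ ℂ and a₃₂(z) c₂²/2 = c₃³ φ₃(c₃ z) for all z ∈ ℂ. -/

import Mathlib

/-- For `k ≥ 1`, `φ_k(z) = ∫_0^1 exp((1-θ)z) θ^(k-1)/(k-1)! dθ`; `φ_0(z) = exp z`. -/
noncomputable def phi : ℕ → ℂ → ℂ
  | 0 => fun z => Complex.exp z
  | (k + 1) => fun z =>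
      ∫ θ in (0:ℝ)..1, Complex.exp ((1 - (θ : ℂ)) * z) * (θ : ℂ) ^ k / (Nat.factorial k : ℂ)

lemma exp_deriv_aux (w z : ℂ) :
    HasDerivAt (fun z : ℂ => Complex.exp ((1 - z) * w)) (Complex.exp ((1 - z) * w) * (-w)) z := by
  have h : HasDerivAt (fun z : ℂ => (1 - z) * w) (-w) z := by
    simpa using ((hasDerivAt_id z).const_sub 1).mul_const w
  exact h.cexp

lemma prod_deriv_aux (w : ℂ) (P P' : ℂ → ℂ) (hP : ∀ z, HasDerivAt P (P' z) z)
    (z : ℂ) :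
    HasDerivAt (fun z : ℂ => Complex.exp ((1 - z) * w) * P z)
      (Complex.exp ((1 - z) * w) * (P' z - w * P z)) z := by
  have := (exp_deriv_aux w z).mul (hP z)
  refine this.congr_deriv ?_
  ring

lemma phi2_eq (w : ℂ) (hw : w ≠ 0) :
    phi 2 w = (Complex.exp w - 1 - w) / w ^ 2 := by
  have hP : ∀ z : ℂ, HasDerivAt (fun z : ℂ => -z / w - 1 / w ^ 2) (-(1 / w)) z := by
    intro z
    have h1 : HasDerivAt (fun z : ℂ => -z / w) (-(1 / w)) z := by
      have := ((hasDerivAt_id z).neg.div_const w)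
      refine this.congr_deriv ?_
      ring
    exact h1.sub_const (1 / w ^ 2)
  have key : ∀ x ∈ Set.uIcc (0:ℝ) (1:ℝ),
      HasDerivAt (fun θ : ℝ => Complex.exp ((1 - (θ:ℂ)) * w) * (-(θ:ℂ) / w - 1 / w ^ 2))
        (Complex.exp ((1 - (x:ℂ)) * w) * (x:ℂ) ^ 1 / (Nat.factorial 1 : ℂ)) x := by
    intro x _
    have h := (prod_deriv_aux w _ _ hP (x:ℂ)).comp_ofReal
    convert h using 1
    simp [Nat.factorial]
    field_simp
    ring
  have hint : IntervalIntegrable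
      (fun θ : ℝ => Complex.exp ((1 - (θ:ℂ)) * w) * (θ:ℂ) ^ 1 / (Nat.factorial 1 : ℂ))
      MeasureTheory.volume 0 1 := by
    apply Continuous.intervalIntegrable
    fun_prop
  have h := intervalIntegral.integral_eq_sub_of_hasDerivAt key hint
  show (∫ θ in (0:ℝ)..1, Complex.exp ((1 - (θ:ℂ)) * w) * (θ:ℂ) ^ 1 / (Nat.factorial 1 : ℂ)) = _
  rw [h]
  simp
  field_simp
  ring

lemma Paux (w : ℂ) (hw : w ≠ 0) (x : ℂ) :
    (-(x / w) - 1 / w ^ 2 - w * (-(x ^ 2 / 2) / w - x / w ^ 2 - 1 / w ^ 3)) = x ^ 2 / 2 := by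
  field_simp
  ring

lemma phi3_eq (w : ℂ) (hw : w ≠ 0) :
    phi 3 w = (Complex.exp w - 1 - w - w ^ 2 / 2) / w ^ 3 := by
  have hP : ∀ z : ℂ, HasDerivAt (fun z : ℂ => -(z ^ 2 / 2) / w - z / w ^ 2 - 1 / w ^ 3)
      (-(z / w) - 1 / w ^ 2) z := by
    intro z
    have h1 : HasDerivAt (fun z : ℂ => -(z ^ 2 / 2) / w) (-(z / w)) z := by
      have := (((hasDerivAt_pow 2 z).div_const 2).neg.div_const w)
      refine this.congr_deriv ?_
      all_goals (field_simp; try ring)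
    have h2 : HasDerivAt (fun z : ℂ => z / w ^ 2) (1 / w ^ 2) z := by
      have := (hasDerivAt_id z).div_const (w ^ 2)
      exact this
    exact (h1.sub h2).sub_const (1 / w ^ 3)
  have key : ∀ x ∈ Set.uIcc (0:ℝ) (1:ℝ),
      HasDerivAt (fun θ : ℝ =>
          Complex.exp ((1 - (θ:ℂ)) * w) * (-((θ:ℂ) ^ 2 / 2) / w - (θ:ℂ) / w ^ 2 - 1 / w ^ 3))
        (Complex.exp ((1 - (x:ℂ)) * w) * (x:ℂ) ^ 2 / (Nat.factorial 2 : ℂ)) x := by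
    intro x _
    have h := (prod_deriv_aux w _ _ hP (x:ℂ)).comp_ofReal
    convert h using 1
    rw [Paux w hw]
    simp [Nat.factorial]
    ring
  have hint : IntervalIntegrable
      (fun θ : ℝ => Complex.exp ((1 - (θ:ℂ)) * w) * (θ:ℂ) ^ 2 / (Nat.factorial 2 : ℂ))
      MeasureTheory.volume 0 1 := by
    apply Continuous.intervalIntegrable
    fun_prop
  have h := intervalIntegral.integral_eq_sub_of_hasDerivAt key hint
  show (∫ θ in (0:ℝ)..1, Complex.exp ((1 - (θ:ℂ)) * w) * (θ:ℂ) ^ 2 / (Nat.factorial 2 : ℂ)) = _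
  rw [h]
  simp
  field_simp
  ring

theorem stmt_6 (c₂ c₃ : ℂ) (hc₃ : c₃ ≠ 0) :
    ¬ ∃ a₃₂ : ℂ → ℂ,
      (∀ z : ℂ, a₃₂ z * c₂ = c₃ ^ 2 * phi 2 (c₃ * z)) ∧
      (∀ z : ℂ, a₃₂ z * c₂ ^ 2 / 2 = c₃ ^ 3 * phi 3 (c₃ * z)) := by
  rintro ⟨a, h1, h2⟩
  -- key identity: for all w ≠ 0, (c₂ w - 2 c₃)(e^w - 1 - w) = -c₃ w²
  have key : ∀ w : ℂ, w ≠ 0 →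
      (c₂ * w - 2 * c₃) * (Complex.exp w - 1 - w) = -c₃ * w ^ 2 := by
    intro w hw
    have hz1 := h1 (w / c₃)
    have hz2 := h2 (w / c₃)
    rw [mul_div_cancel₀ _ hc₃] at hz1 hz2
    rw [phi2_eq w hw] at hz1
    rw [phi3_eq w hw] at hz2
    have comb : c₂ * (c₃ ^ 2 * ((Complex.exp w - 1 - w) / w ^ 2)) / 2
        = c₃ ^ 3 * ((Complex.exp w - 1 - w - w ^ 2 / 2) / w ^ 3) := by
      rw [← hz1, ← hz2]; ring
    field_simp at comb
    -- cancel the nonzero factor 2 c₃² w²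
    have h' : (2 * c₃ ^ 2 * w ^ 2) * ((c₂ * w - 2 * c₃) * (Complex.exp w - 1 - w))
        = (2 * c₃ ^ 2 * w ^ 2) * (-c₃ * w ^ 2) := by linear_combination (2 * c₃ ^ 2 * w ^ 2) * comb
    exact mul_left_cancel₀ (mul_ne_zero (mul_ne_zero two_ne_zero (pow_ne_zero _ hc₃)) (pow_ne_zero _ hw)) h'
  by_cases hc₂ : c₂ = 0
  · -- then exp 1 = 5/2, contradiction
    have h := key 1 one_ne_zero
    rw [hc₂] at h
    have h' : c₃ * (2 * (Complex.exp 1 - 2)) = c₃ * 1 := by linear_combination -h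
    have hexp : Complex.exp 1 = 5 / 2 := by
      have := mul_left_cancel₀ hc₃ h'
      linear_combination this / 2
    have hR : Real.exp 1 = 5 / 2 := by
      have h5 : ((Real.exp 1 : ℝ) : ℂ) = ((5 / 2 : ℝ) : ℂ) := by
        rw [Complex.ofReal_exp]
        push_cast
        exact hexp
      exact_mod_cast h5
    have hgt : (2.7182818283 : ℝ) < Real.exp 1 := Real.exp_one_gt_d9
    rw [hR] at hgt
    norm_num at hgt
  · have hw : (2 * c₃ / c₂ : ℂ) ≠ 0 := by
      apply div_ne_zero _ hc₂
      simp [hc₃]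
    have h := key _ hw
    rw [mul_div_cancel₀ _ hc₂] at h
    have h0 : (0 : ℂ) = -c₃ * (2 * c₃ / c₂) ^ 2 := by linear_combination h
    have h2 : c₃ * (2 * c₃ / c₂) ^ 2 ≠ 0 := mul_ne_zero hc₃ (pow_ne_zero _ hw)
    exact h2 (by linear_combination h0)
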